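/- Let k ≥ 4 and let η_k denote the unique zero of Φ_k in (π/k, π/(k-1)). Then for all η ∈ [η_{k+1}, η_k) and all integers j ≥ k, Ψ_j(η) := sin η + |a|^{j-2} sin((j+1)η) > 0, where |a| = 1/(2cos η). -/

import Mathlib

open Real Set


private lemma key4' (s t : ℝ) (hs : 0 < s) (ht0 : 0 < t) (hpy : s^2 + t = 1) (h4 : 1/8 < t^2)
    (ht : t < 2/3) : 1 < 4*s*t := by
  have h16 : 1 < 16*t^2*(1-t) := by
    nlinarith [mul_pos (show (0:ℝ) < t^2 - 1/8 by linarith) (show (0:ℝ) < 2/3 - t by linarith)]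
  have hq : (4*s*t)^2 = 16*t^2*(1-t) := by linear_combination (16*t^2)*hpy
  nlinarith [mul_pos (mul_pos (show (0:ℝ) < 4 by norm_num) hs) ht0]

private lemma csq' (c : ℝ) (hc : 0 < c) (h : 16*c^4 = 2) : 1/2 < c := by
  have hcc : 1/4 < c^2 := by nlinarith [sq_nonneg c]
  nlinarith

private lemma Ablt' (c : ℝ) (hc : Real.sqrt 2/2 < c) : 1 < Real.sqrt 2/2 * (2*c) := by
  have h2sq : Real.sqrt 2 ^ 2 = 2 := Real.sq_sqrt (by norm_num)
  have h2nn : (0:ℝ) ≤ Real.sqrt 2 := Real.sqrt_nonneg 2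
  nlinarith

private lemma sinlb' (K : ℝ) (hK : 7 ≤ K) : (0:ℝ) < π*K^2 - π^3/4 - 2*K^2 := by
  have hπ1 : 3.141592 < π := Real.pi_gt_d6
  have hπ2 : π < 3.15 := Real.pi_lt_d2
  have hp2 : π^2 < 9.9225 := by nlinarith
  have hp3 : π^3 < 31.256 := by nlinarith [Real.pi_pos]
  have hK2 : (49:ℝ) ≤ K^2 := by nlinarith
  nlinarith

private lemma sqrt2lt'' : Real.sqrt 2 < 1.4143 := by
  rw [show (1.4143:ℝ) = √(1.4143^2) from (Real.sqrt_sq (by norm_num)).symm]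
  exact Real.sqrt_lt_sqrt (by norm_num) (by norm_num)

private lemma cube2' : (Real.sqrt 2 / 2 : ℝ)^3 < 1/2 := by
  have h2sq : Real.sqrt 2 ^ 2 = 2 := Real.sq_sqrt (by norm_num)
  nlinarith [sqrt2lt'', Real.sqrt_nonneg 2]

private lemma sqhalf' : (Real.sqrt 2 / 2 : ℝ) ≤ 1 := by
  nlinarith [sqrt2lt'', Real.sqrt_nonneg 2]


private lemma psi_pos' (η B x : ℝ) (hB0 : 0 ≤ B) (hB1 : B ≤ 1) {M N : ℕ} (hMN : M ≤ N)
    (h : B ^ M < Real.sin η) : 0 < Real.sin η + B ^ N * Real.sin x := by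
  have h1 : B ^ N ≤ B ^ M := pow_le_pow_of_le_one hB0 hB1 hMN
  have h2 : -(B ^ N) ≤ B ^ N * Real.sin x := by
    nlinarith [Real.neg_one_le_sin x, pow_nonneg hB0 N]
  linarith

private lemma natpow' (m : ℕ) : (m + 7)^2 ≤ 2^(m+6) := by
  induction m with
  | zero => norm_num
  | succ n ih =>
      have h3 : (n+1+7)^2 ≤ 2*(n+7)^2 := by
        zify; nlinarith [sq_nonneg (n:ℤ), Int.natCast_nonneg n]
      calc (n+1+7)^2 ≤ 2*(n+7)^2 := h3
        _ ≤ 2*2^(n+6) := by omega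
        _ = 2^(n+1+6) := by ring

private lemma sqrt5lt' : Real.sqrt 5 < 2.2361 := by
  rw [show (2.2361:ℝ) = √(2.2361^2) from (Real.sqrt_sq (by norm_num)).symm]
  exact Real.sqrt_lt_sqrt (by norm_num) (by norm_num)

private lemma sqrt2lt' : Real.sqrt 2 < 1.4143 := by
  rw [show (1.4143:ℝ) = √(1.4143^2) from (Real.sqrt_sq (by norm_num)).symm]
  exact Real.sqrt_lt_sqrt (by norm_num) (by norm_num)

set_option maxHeartbeats 1000000 in
theorem stmt14 (k : ℕ) (hk : 4 ≤ k) (A : ℝ → ℝ)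
    (hA : ∀ η, A η = 1 / (2 * Real.cos η))
    (Φ : ℕ → ℝ → ℝ)
    (hΦ : ∀ j η, Φ j η = (1 - A η ^ 4) * Real.sin (((j : ℝ) - 1) * η)
      - A η ^ 3 * Real.sin (((j : ℝ) - 2) * η) + A η ^ j * Real.sin η)
    (ηk : ℝ) (hηk : ηk ∈ Set.Ioo (π / k) (π / ((k : ℝ) - 1)) ∧ Φ k ηk = 0)
    (ηk1 : ℝ) (hηk1 : ηk1 ∈ Set.Ioo (π / (k + 1)) (π / k) ∧ Φ (k + 1) ηk1 = 0) :
    ∀ η : ℝ, ηk1 ≤ η → η < ηk → ∀ j : ℕ, k ≤ j →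
      0 < Real.sin η + A η ^ (j - 2) * Real.sin ((j + 1) * η) := by
  obtain ⟨⟨hka, hkb⟩, hΦ0⟩ := hηk
  obtain ⟨⟨hk1a, -⟩, -⟩ := hηk1
  intro η hη1 hη2 j hj
  have hπ := Real.pi_pos
  have hπ1 := Real.pi_gt_d6
  have hπ2 := Real.pi_lt_d2
  have hkR : (4:ℝ) ≤ (k:ℝ) := by exact_mod_cast hk
  have hηlb : π/((k:ℝ)+1) < η := lt_of_lt_of_le hk1a hη1
  have hηub : η < π/((k:ℝ)-1) := lt_trans hη2 hkb
  have hη0 : 0 < η := lt_trans (by positivity) hηlb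
  have hAeq := hA η
  rcases Nat.lt_or_ge k 6 with h6 | h6
  · interval_cases k
    · -- k = 4
      -- ηk bounds
      have hka' : π/4 < ηk := by norm_num at hka; exact hka
      have hkb' : ηk < π/3 := by norm_num at hkb; exact hkb
      -- derive 16 cos ηk ^ 4 = 2 from Φ 4 ηk = 0
      rw [hΦ 4 ηk, hA ηk] at hΦ0
      have hc4 : 16 * Real.cos ηk ^ 4 = 2 := by
        have hx0 : 0 < ηk := by linarith
        have hxπ : ηk < π := by linarith
        have hs : 0 < Real.sin ηk := Real.sin_pos_of_pos_of_lt_pi hx0 hxπ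
        have hc : 1/2 < Real.cos ηk := by
          have := Real.cos_lt_cos_of_nonneg_of_le_pi (le_of_lt hx0) (by linarith) hkb'
          rwa [Real.cos_pi_div_three] at this
        have hc0 : Real.cos ηk ≠ 0 := by linarith
        have h3 : Real.sin ((((4:ℕ):ℝ) - 1) * ηk) = 3 * Real.sin ηk - 4 * Real.sin ηk ^ 3 := by
          norm_num
          exact Real.sin_three_mul ηk
        have h2' : Real.sin ((((4:ℕ):ℝ) - 2) * ηk) = 2 * Real.sin ηk * Real.cos ηk := by
          norm_num
          exact Real.sin_two_mul ηk
        rw [h3, h2'] at hΦ0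
        have hpy := Real.sin_sq_add_cos_sq ηk
        set s := Real.sin ηk
        set c := Real.cos ηk
        have hfac : c^7 * (s * ((4*c^2-1) * (16*c^4-2))) = 0 := by
          field_simp at hΦ0
          linear_combination c^7 * hΦ0 + 4*c^7*s*(16*c^4-1) * hpy
        have hc7 : c^7 ≠ 0 := pow_ne_zero _ hc0
        have h4c : (0:ℝ) < 4*c^2 - 1 := by nlinarith
        have h1' := (mul_eq_zero.mp hfac).resolve_left hc7
        have h2'' := (mul_eq_zero.mp h1').resolve_left (ne_of_gt hs)
        have h3'' := (mul_eq_zero.mp h2'').resolve_left (ne_of_gt h4c)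
        linarith
      clear hΦ0 hΦ hA
      -- bounds on cos η
      have hck : 0 < Real.cos ηk := by
        apply Real.cos_pos_of_mem_Ioo
        constructor <;> [linarith; linarith]
      have hcgt : Real.cos ηk < Real.cos η :=
        Real.cos_lt_cos_of_nonneg_of_le_pi (le_of_lt hη0) (by linarith) hη2
      have hck2 : 1/2 < Real.cos ηk := csq' _ hck hc4
      have hcη : 1/2 < Real.cos η := by linarith
      have h4 : 1/8 < Real.cos η ^ 4 := by
        have hp := pow_lt_pow_left₀ hcgt hck.le (show 4 ≠ 0 by norm_num)
        linarith
      have hη5 : π/5 < η := by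
        have : π/(((4:ℕ):ℝ)+1) = π/5 := by norm_num
        linarith [hηlb, this.symm.le]
      have hub : Real.cos η < (1 + Real.sqrt 5)/4 := by
        have h := Real.cos_lt_cos_of_nonneg_of_le_pi (by positivity) (by linarith) hη5
        rwa [Real.cos_pi_div_five] at h
      have ht : Real.cos η ^ 2 < 2/3 := by
        nlinarith [sqrt5lt', Real.sqrt_nonneg 5]
      have hsη : 0 < Real.sin η := Real.sin_pos_of_pos_of_lt_pi hη0 (by linarith)
      have hpy := Real.sin_sq_add_cos_sq η
      have hkey : 1 < 4 * Real.sin η * Real.cos η ^ 2 := by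
        have h4' : 1/8 < (Real.cos η ^ 2)^2 := by
          have e : (Real.cos η ^ 2)^2 = Real.cos η ^ 4 := by ring
          linarith
        exact key4' _ _ hsη (by positivity) (Real.sin_sq_add_cos_sq η) h4' ht
      have hA2 : A η ^ 2 < Real.sin η := by
        have he : A η ^ 2 = 1/(4 * Real.cos η ^ 2) := by
          rw [hAeq]; field_simp; ring
        rw [he, div_lt_iff₀ (by positivity)]
        have e : Real.sin η * (4 * Real.cos η ^ 2) = 4 * Real.sin η * Real.cos η ^ 2 := by ring
        linarith
      have hB0 : 0 ≤ A η := by rw [hAeq]; positivity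
      have hB1 : A η ≤ 1 := by
        rw [hAeq, div_le_one (by linarith)]; linarith
      exact psi_pos' η (A η) _ hB0 hB1 (show 2 ≤ j - 2 by omega) hA2
    · -- k = 5
      clear hΦ0 hΦ hA
      have hη6 : π/6 < η := by
        have : π/(((5:ℕ):ℝ)+1) = π/6 := by norm_num
        linarith [hηlb, this.symm.le]
      have hη4 : η < π/4 := by
        have : π/(((5:ℕ):ℝ)-1) = π/4 := by norm_num
        linarith [hηub, this.le]
      have hc : Real.sqrt 2 / 2 < Real.cos η := by
        have h := Real.cos_lt_cos_of_nonneg_of_le_pi (le_of_lt hη0) (by linarith) hη4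
        rwa [Real.cos_pi_div_four] at h
      have hs : 1/2 < Real.sin η := by
        have h := Real.sin_lt_sin_of_lt_of_le_pi_div_two (by linarith) (by linarith) hη6
        rwa [Real.sin_pi_div_six] at h
      have hcpos : 0 < Real.cos η := by
        have h2nn : (0:ℝ) ≤ Real.sqrt 2 := Real.sqrt_nonneg 2
        have h2sq : Real.sqrt 2 ^ 2 = 2 := Real.sq_sqrt (by norm_num)
        nlinarith
      have hB : A η < Real.sqrt 2 / 2 := by
        rw [hAeq, div_lt_iff₀ (by linarith : (0:ℝ) < 2 * Real.cos η)]
        exact Ablt' _ hc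
      have hB0 : 0 ≤ A η := by rw [hAeq]; positivity
      have hB1 : A η ≤ 1 := le_trans (le_of_lt hB) sqhalf'
      have hM : A η ^ 3 < Real.sin η := by
        have h1 : A η ^ 3 ≤ (Real.sqrt 2 / 2)^3 := pow_le_pow_left₀ hB0 (le_of_lt hB) 3
        linarith [cube2']
      exact psi_pos' η (A η) _ hB0 hB1 (show 3 ≤ j - 2 by omega) hM
  · -- k ≥ 6
    clear hΦ0 hΦ hA
    obtain ⟨m, rfl⟩ : ∃ m, k = m + 6 := ⟨k - 6, by omega⟩
    have hmR : (0:ℝ) ≤ (m:ℝ) := Nat.cast_nonneg m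
    have hkcast : ((m + 6 : ℕ):ℝ) = (m:ℝ) + 6 := by push_cast; ring
    rw [hkcast] at hηlb hηub
    have hub5 : η < π/5 := by
      have h1 : π/((m:ℝ)+6-1) ≤ π/5 := by
        apply div_le_div_of_nonneg_left (by linarith) (by norm_num) (by linarith)
      linarith
    have hη4' : η < π/4 := by linarith
    have hc : Real.sqrt 2 / 2 < Real.cos η := by
      have h := Real.cos_lt_cos_of_nonneg_of_le_pi (le_of_lt hη0) (by linarith) hη4'
      rwa [Real.cos_pi_div_four] at h
    have h2sq : Real.sqrt 2 ^ 2 = 2 := Real.sq_sqrt (by norm_num)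
    have hcpos : 0 < Real.cos η := by
      have h2nn : (0:ℝ) ≤ Real.sqrt 2 := Real.sqrt_nonneg 2
      nlinarith
    have hB : A η < Real.sqrt 2 / 2 := by
      rw [hAeq, div_lt_iff₀ (by linarith : (0:ℝ) < 2 * Real.cos η)]
      exact Ablt' _ hc
    have hB0 : 0 ≤ A η := by rw [hAeq]; positivity
    have hB1 : A η ≤ 1 := le_trans (le_of_lt hB) sqhalf'
    set K : ℝ := (m:ℝ) + 7 with hK
    have hKpos : (0:ℝ) < K := by rw [hK]; linarith
    have hK7 : (7:ℝ) ≤ K := by rw [hK]; linarith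
    have hxlb : π/K < η := by
      have : π/((m:ℝ)+6+1) = π/K := by rw [hK]; ring_nf
      linarith [hηlb, this.le]
    have hsin : 2/K < Real.sin η := by
      have hx0 : 0 < π/K := by positivity
      have hx1 : π/K ≤ 1 := by
        rw [div_le_one hKpos]; linarith
      have h1 : π/K - (π/K)^3/4 < Real.sin (π/K) := by
        have h := Real.sin_gt_sub_cube hx0
        have := pow_pos hx0 3
        linarith
      have h2 : Real.sin (π/K) < Real.sin η := by
        have hx0' : (0:ℝ) ≤ π/K := by positivity
        exact Real.sin_lt_sin_of_lt_of_le_pi_div_two (by linarith) (by linarith) hxlb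
      have h3 : 2/K < π/K - (π/K)^3/4 := by
        have hnum : (0:ℝ) < π * K^2 - π^3/4 - 2*K^2 := sinlb' K hK7
        have he : π/K - (π/K)^3/4 - 2/K = (π*K^2 - π^3/4 - 2*K^2)/K^3 := by
          field_simp
        have : (0:ℝ) < (π*K^2 - π^3/4 - 2*K^2)/K^3 := by positivity
        linarith
      linarith
    have hApow : A η ^ (m + 6 - 2) ≤ (Real.sqrt 2 / 2) ^ (m + 4) := by
      have : m + 6 - 2 = m + 4 := by omega
      rw [this]
      exact pow_le_pow_left₀ hB0 (le_of_lt hB) _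
    have hp2 : ((Real.sqrt 2 / 2 : ℝ)) ^ (m + 4) ≤ 2/K := by
      have ha0 : (0:ℝ) ≤ (Real.sqrt 2 / 2) ^ (m + 4) := by positivity
      have hb0 : (0:ℝ) < 2/K := by positivity
      have e1 : ((Real.sqrt 2 / 2 : ℝ) ^ (m + 4))^2 = (1/2:ℝ)^(m+4) := by
        rw [← pow_mul, mul_comm, pow_mul]
        congr 1
        rw [div_pow, h2sq]; norm_num
      have e2 : ((1:ℝ)/2)^(m+4) = 4/(2:ℝ)^(m+6) := by
        rw [show m + 6 = (m + 4) + 2 by omega, pow_add]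
        rw [div_pow, one_pow]
        field_simp
        ring
      have hnat : (K:ℝ)^2 ≤ (2:ℝ)^(m+6) := by
        rw [hK]
        have := natpow' m
        have : ((m+7:ℕ):ℝ)^2 ≤ ((2^(m+6):ℕ):ℝ) := by exact_mod_cast this
        push_cast at this
        linarith
      have hsq : ((Real.sqrt 2 / 2 : ℝ) ^ (m + 4))^2 ≤ (2/K)^2 := by
        rw [e1, e2, div_pow]
        norm_num
        rw [div_le_div_iff₀ (by positivity) (by positivity)]
        nlinarith [hnat, hKpos]
      exact (pow_le_pow_iff_left₀ ha0 (le_of_lt hb0) two_ne_zero).mp hsq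
    have hM : A η ^ (m + 6 - 2) < Real.sin η := by
      calc A η ^ (m + 6 - 2) ≤ (Real.sqrt 2 / 2) ^ (m + 4) := hApow
        _ ≤ 2/K := hp2
        _ < Real.sin η := hsin
    exact psi_pos' η (A η) _ hB0 hB1 (Nat.sub_le_sub_right hj 2) hM
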